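/- Let $\ell(s)=\beta\big(\sum_{k=0}^{n_0}|a_k|\,\psi_0^{k-1}s^k-s\big)$ with $\beta>0$, $|a_k|\ge0$, $\psi_0>0$, and suppose $\ell$ satisfies one of: (i) $\ell(1)\le0$; (ii) $\ell(1)>0$ and $\ell$ has a zero $\hat s>1$ with $\ell>0$ on $[1,\hat s)$; (iii) $\ell>0$ on $[1,\infty)$ and $\int_1^\infty ds/\ell(s)>T$. Then for all sufficiently small $\varepsilon>0$, the perturbed function $\ell_\varepsilon(s)=\beta\big(\sum_{k=0}^{n_0}(1+\varepsilon)|a_k|\,((1+\varepsilon)\psi_0)^{k-1}s^k-s\big)$ also satisfies one of conditions (i)–(iii), and hence the ODE $\rho'=\ell_\varepsilon(\rho)$, $\rho(0)=1$ admits a unique bounded solution on $[0,T]$. -/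

import Mathlib

open Set MeasureTheory

/-- The conditions `(ℓ1)-(ℓ3)` of Assumption 2.1 for a polynomial `ℓ` on horizon `T`. -/
def SatisfiesEllCond (T : ℝ) (ℓ : ℝ → ℝ) : Prop :=
  ℓ 1 ≤ 0 ∨
  (0 < ℓ 1 ∧ ∃ sHat : ℝ, 1 < sHat ∧ ℓ sHat = 0 ∧ ∀ s ∈ Ico (1 : ℝ) sHat, 0 < ℓ s) ∨
  ((∀ s : ℝ, 1 ≤ s → 0 < ℓ s) ∧
    ENNReal.ofReal T < ∫⁻ s in Ioi (1 : ℝ), ENNReal.ofReal (1 / ℓ s))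

open Finset intervalIntegral

noncomputable def pf (β : ℝ) (n : ℕ) (e : ℕ → ℝ) : ℝ → ℝ :=
  fun s => β * (∑ k ∈ Finset.range n, e k * s ^ k - s)

lemma pf_hasDerivAt (β : ℝ) (n : ℕ) (e : ℕ → ℝ) (s : ℝ) :
    HasDerivAt (pf β n e) (β * (∑ k ∈ Finset.range n, e k * (k * s ^ (k-1)) - 1)) s := by
  have h : ∀ k ∈ Finset.range n, HasDerivAt (fun x : ℝ => e k * x ^ k) (e k * (k * s ^ (k-1))) s :=
    fun k _ => (hasDerivAt_pow k s).const_mul (e k)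
  exact (((HasDerivAt.fun_sum h).sub (hasDerivAt_id s)).const_mul β)

lemma pf_continuous (β : ℝ) (n : ℕ) (e : ℕ → ℝ) : Continuous (pf β n e) := by
  unfold pf
  continuity

lemma pf_lip (β : ℝ) (hβ : 0 ≤ β) (n : ℕ) (e : ℕ → ℝ) (he : ∀ k, 0 ≤ e k) (M : ℝ) (hM : 0 ≤ M)
    {x y : ℝ} (hx : x ∈ Icc (-M) M) (hy : y ∈ Icc (-M) M) :
    |pf β n e y - pf β n e x| ≤ (β * (∑ k ∈ Finset.range n, e k * (k * M ^ (k-1)) + 1)) * |y - x| := by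
  have key := Convex.norm_image_sub_le_of_norm_hasDerivWithin_le
    (f := pf β n e) (f' := fun s => β * (∑ k ∈ Finset.range n, e k * (k * s ^ (k-1)) - 1))
    (s := Icc (-M) M) (C := β * (∑ k ∈ Finset.range n, e k * (k * M ^ (k-1)) + 1))
    (fun s _ => (pf_hasDerivAt β n e s).hasDerivWithinAt) ?_ (convex_Icc _ _) hx hy
  · simpa [Real.norm_eq_abs] using key
  · intro s hs
    rw [Real.norm_eq_abs, abs_mul, abs_of_nonneg hβ]
    refine mul_le_mul_of_nonneg_left ?_ hβ
    have habs : |∑ k ∈ Finset.range n, e k * (k * s ^ (k-1))|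
        ≤ ∑ k ∈ Finset.range n, e k * (k * M ^ (k-1)) := by
      refine (Finset.abs_sum_le_sum_abs _ _).trans (Finset.sum_le_sum fun k _ => ?_)
      have hsM : |s ^ (k-1)| ≤ M ^ (k-1) := by
        rw [abs_pow]
        exact pow_le_pow_left₀ (abs_nonneg _) (abs_le.mpr ⟨hs.1, hs.2⟩) _
      rw [abs_mul, abs_of_nonneg (he k), abs_mul, abs_of_nonneg (by positivity : (0:ℝ) ≤ (k:ℝ))]
      have hk : (0:ℝ) ≤ (k:ℝ) := by positivity
      exact mul_le_mul_of_nonneg_left (mul_le_mul_of_nonneg_left hsM hk) (he k)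
    have h2 : (0:ℝ) ≤ ∑ k ∈ Finset.range n, e k * (k * M ^ (k-1)) :=
      (abs_nonneg _).trans habs
    calc |∑ k ∈ Finset.range n, e k * (k * s ^ (k-1)) - 1|
        ≤ |∑ k ∈ Finset.range n, e k * (k * s ^ (k-1))| + |(1:ℝ)| := abs_sub _ _
      _ ≤ ∑ k ∈ Finset.range n, e k * (k * M ^ (k-1)) + 1 := by
          rw [abs_one]; linarith

lemma log_integral {z L a b : ℝ} (hL : 0 < L) (hab : a ≤ b) (hbz : b < z) :
    ∫ s in a..b, (L * (z - s))⁻¹ = L⁻¹ * (Real.log (z - a) - Real.log (z - b)) := by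
  have hder : ∀ s ∈ uIcc a b, HasDerivAt (fun s => -(L⁻¹ * Real.log (z - s))) ((L * (z - s))⁻¹) s := by
    intro s hs
    rw [uIcc_of_le hab] at hs
    have hzs : 0 < z - s := by linarith [hs.2]
    have h1 : HasDerivAt (fun s : ℝ => z - s) (-1) s := (hasDerivAt_id s).const_sub z
    have h2 : HasDerivAt (fun s => Real.log (z - s)) ((z - s)⁻¹ * (-1)) s :=
      (Real.hasDerivAt_log hzs.ne').comp s h1
    have h3 : HasDerivAt (fun s => -(L⁻¹ * Real.log (z - s))) (-(L⁻¹ * ((z - s)⁻¹ * -1))) s :=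
      (h2.const_mul L⁻¹).neg
    convert h3 using 1
    rw [mul_inv]; ring
  have hint : IntervalIntegrable (fun s => (L * (z - s))⁻¹) volume a b := by
    apply ContinuousOn.intervalIntegrable
    apply ContinuousOn.inv₀
    · fun_prop
    · intro s hs
      rw [uIcc_of_le hab] at hs
      have : 0 < z - s := by linarith [hs.2]
      positivity
  rw [integral_eq_sub_of_hasDerivAt hder hint]
  ring

lemma div_lemma {f : ℝ → ℝ} (hf : Continuous f) {z L T : ℝ} (hz : 1 < z) (hL : 0 < L)
    (hT : 0 < T)
    (hpos : ∀ s ∈ Ico (1:ℝ) z, 0 < f s)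
    (hb : ∀ s ∈ Icc (1:ℝ) z, f s ≤ L * (z - s)) :
    ∃ v, 1 < v ∧ v < z ∧ T < ∫ s in (1:ℝ)..v, (f s)⁻¹ := by
  set η := (z - 1) * Real.exp (-(L * (T + 1))) with hη
  have hη0 : 0 < η := mul_pos (by linarith) (Real.exp_pos _)
  have hexp1 : Real.exp (-(L * (T + 1))) < 1 := by
    rw [Real.exp_lt_one_iff]; nlinarith
  have hηlt : η < z - 1 := by nlinarith
  refine ⟨z - η, by linarith, by linarith, ?_⟩
  have hsub : Icc (1:ℝ) (z - η) ⊆ Ico (1:ℝ) z := fun s hs => ⟨hs.1, by linarith [hs.2]⟩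
  have hub : (1:ℝ) ≤ z - η := by linarith
  have hcont : ContinuousOn (fun s => (f s)⁻¹) (Icc (1:ℝ) (z - η)) :=
    ContinuousOn.inv₀ hf.continuousOn (fun s hs => (hpos s (hsub hs)).ne')
  have hint1 : IntervalIntegrable (fun s => (f s)⁻¹) volume 1 (z - η) := by
    apply ContinuousOn.intervalIntegrable
    rwa [uIcc_of_le hub]
  have hint2 : IntervalIntegrable (fun s => (L * (z - s))⁻¹) volume 1 (z - η) := by
    apply ContinuousOn.intervalIntegrable
    rw [uIcc_of_le hub]
    apply ContinuousOn.inv₀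
    · fun_prop
    · intro s hs
      have : 0 < z - s := by linarith [hs.2]
      positivity
  have hmono : ∫ s in (1:ℝ)..(z - η), (L * (z - s))⁻¹ ≤ ∫ s in (1:ℝ)..(z - η), (f s)⁻¹ := by
    apply integral_mono_on hub hint2 hint1
    intro s hs
    have h1 : 0 < f s := hpos s (hsub hs)
    have h2 : f s ≤ L * (z - s) := hb s ⟨hs.1, by linarith [hs.2]⟩
    exact inv_anti₀ h1 h2
  have hcalc : ∫ s in (1:ℝ)..(z - η), (L * (z - s))⁻¹ = T + 1 := by
    rw [log_integral hL hub (by linarith)]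
    have : z - (z - η) = η := by ring
    rw [this, hη, Real.log_mul (by linarith : z - 1 ≠ 0) (Real.exp_ne_zero _), Real.log_exp]
    field_simp
    ring
  rw [hcalc] at hmono
  linarith

lemma core_lemma {f : ℝ → ℝ} (hf : Continuous f) {u v T : ℝ} (hu : u < 1) (hv : 1 < v)
    (hT : 0 ≤ T)
    (hpos : ∀ s ∈ Icc u v, 0 < f s)
    (hFv : T < ∫ s in (1:ℝ)..v, (f s)⁻¹) :
    ∃ ρ : ℝ → ℝ, ρ 0 = 1 ∧ (∀ t ∈ Icc 0 T, HasDerivAt ρ (f (ρ t)) t) ∧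
      ∀ t ∈ Icc 0 T, ρ t ∈ Icc u v := by
  have huv : u ≤ v := by linarith
  have h1mem : (1:ℝ) ∈ Icc u v := ⟨hu.le, hv.le⟩
  have hintuv : ∀ {x y : ℝ}, x ∈ Icc u v → y ∈ Icc u v →
      IntervalIntegrable (fun s => (f s)⁻¹) volume x y := by
    intro x y hx hy
    apply ContinuousOn.intervalIntegrable
    have hss : Set.uIcc x y ⊆ Icc u v := Set.uIcc_subset_Icc hx hy
    exact ContinuousOn.inv₀ (hf.continuousOn.mono hss)
      (fun s hs => (hpos s (hss hs)).ne')
  set F : ℝ → ℝ := fun s => ∫ x in (1:ℝ)..s, (f x)⁻¹ with hFdef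
  have hFder : ∀ s ∈ Icc u v, HasDerivAt F (f s)⁻¹ s := by
    intro s hs
    refine integral_hasDerivAt_right (hintuv h1mem hs)
      ⟨univ, Filter.univ_mem, (hf.measurable.inv).aestronglyMeasurable⟩ ?_
    exact hf.continuousAt.inv₀ (hpos s hs).ne'
  have hFcont : ContinuousOn F (Icc u v) :=
    fun s hs => ((hFder s hs).continuousAt).continuousWithinAt
  have hFmono : StrictMonoOn F (Icc u v) := by
    intro x hx y hy hxy
    have hadd := integral_add_adjacent_intervals (hintuv h1mem hx) (hintuv hx hy)
    have hposxy : 0 < ∫ s in x..y, (f s)⁻¹ := by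
      apply intervalIntegral_pos_of_pos_on (hintuv hx hy)
      · intro s hs
        have : s ∈ Icc u v := ⟨hx.1.trans hs.1.le, hs.2.le.trans hy.2⟩
        exact inv_pos.mpr (hpos s this)
      · exact hxy
    have hFy : F y = F x + ∫ s in x..y, (f s)⁻¹ := by
      simp only [hFdef]
      linarith [hadd]
    linarith
  have hF1 : F 1 = 0 := integral_same
  set α := F u with hαdef
  set ω := F v with hωdef
  have hα : α < 0 := by
    have := hFmono ⟨le_refl u, huv⟩ h1mem hu
    rw [hF1] at this; exact this
  have hωT : T < ω := hFv
  have hsurj : ∀ t ∈ Icc α ω, ∃ s ∈ Icc u v, F s = t := by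
    intro t ht
    have := intermediate_value_Icc huv hFcont
    obtain ⟨s, hs1, hs2⟩ := this ht
    exact ⟨s, hs1, hs2⟩
  set ρ : ℝ → ℝ := fun t => if h : t ∈ Icc α ω then (hsurj t h).choose else 1 with hρdef
  have hρ : ∀ t (h : t ∈ Icc α ω), ρ t ∈ Icc u v ∧ F (ρ t) = t := by
    intro t h
    simp only [hρdef, dif_pos h]
    exact ⟨(hsurj t h).choose_spec.1, (hsurj t h).choose_spec.2⟩
  have hρ0 : ρ 0 = 1 := by
    have h0 : (0:ℝ) ∈ Icc α ω := ⟨hα.le, hT.trans hωT.le⟩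
    obtain ⟨hm, hFe⟩ := hρ 0 h0
    exact hFmono.injOn hm h1mem (by rw [hFe, hF1])
  have hcontAt : ∀ t ∈ Ioo α ω, ContinuousAt ρ t := by
    intro t ht
    obtain ⟨hx, hFx⟩ := hρ t (Ioo_subset_Icc_self ht)
    have hxu : u < ρ t := by
      rcases eq_or_lt_of_le hx.1 with h | h
      · exfalso; rw [← h] at hFx; rw [← hαdef] at hFx; exact absurd hFx.symm (ne_of_gt ht.1)
      · exact h
    have hxv : ρ t < v := by
      rcases eq_or_lt_of_le hx.2 with h | h
      · exfalso; rw [h] at hFx; rw [← hωdef] at hFx; exact absurd hFx (ne_of_gt ht.2)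
      · exact h
    rw [Metric.continuousAt_iff]
    intro ε hε
    set ε' := min ε (min (ρ t - u) (v - ρ t)) / 2 with hε'def
    have hε'0 : 0 < ε' := by
      apply div_pos _ two_pos
      exact lt_min hε (lt_min (by linarith) (by linarith))
    have hm1 : (ε ⊓ ((ρ t - u) ⊓ (v - ρ t))) ≤ ε := min_le_left _ _
    have hm2 : (ε ⊓ ((ρ t - u) ⊓ (v - ρ t))) ≤ ρ t - u := (min_le_right _ _).trans (min_le_left _ _)
    have hm3 : (ε ⊓ ((ρ t - u) ⊓ (v - ρ t))) ≤ v - ρ t := (min_le_right _ _).trans (min_le_right _ _)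
    have hε'1 : ε' ≤ (ρ t - u) / 2 := by rw [hε'def]; linarith
    have hε'2 : ε' ≤ (v - ρ t) / 2 := by rw [hε'def]; linarith
    have hε'3 : ε' < ε := by rw [hε'def]; linarith
    have hslo : ρ t - ε' ∈ Icc u v := ⟨by linarith, by linarith⟩
    have hshi : ρ t + ε' ∈ Icc u v := ⟨by linarith, by linarith⟩
    have hFlo : F (ρ t - ε') < t := by
      have h := hFmono hslo hx (by linarith : ρ t - ε' < ρ t)
      rwa [hFx] at h
    have hFhi : t < F (ρ t + ε') := by
      have h := hFmono hx hshi (by linarith : ρ t < ρ t + ε')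
      rwa [hFx] at h
    refine ⟨min (t - F (ρ t - ε')) (F (ρ t + ε') - t), lt_min (by linarith) (by linarith), ?_⟩
    intro y hy
    rw [Real.dist_eq] at hy ⊢
    have hy1 : F (ρ t - ε') < y := by
      have := abs_lt.mp (hy.trans_le (min_le_left _ _))
      linarith [this.1]
    have hy2 : y < F (ρ t + ε') := by
      have := abs_lt.mp (hy.trans_le (min_le_right _ _))
      linarith [this.2]
    have hyα : α ≤ y := by
      have : F u ≤ F (ρ t - ε') := by
        rcases eq_or_lt_of_le hslo.1 with h | h
        · rw [h]
        · exact (hFmono ⟨le_refl u, huv⟩ hslo h).le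
      rw [hαdef]; linarith
    have hyω : y ≤ ω := by
      have : F (ρ t + ε') ≤ F v := by
        rcases eq_or_lt_of_le hshi.2 with h | h
        · rw [h]
        · exact (hFmono hshi ⟨huv, le_refl v⟩ h).le
      rw [hωdef]; linarith
    obtain ⟨hym, hyF⟩ := hρ y ⟨hyα, hyω⟩
    have h1 : ρ t - ε' < ρ y := by
      by_contra h
      push_neg at h
      have := hFmono.le_iff_le hym hslo |>.mpr h
      rw [hyF] at this; linarith
    have h2 : ρ y < ρ t + ε' := by
      by_contra h
      push_neg at h
      have := hFmono.le_iff_le hshi hym |>.mpr h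
      rw [hyF] at this; linarith
    rw [abs_lt]
    constructor <;> linarith
  refine ⟨ρ, hρ0, ?_, ?_⟩
  · intro t ht
    have htm : t ∈ Ioo α ω := ⟨hα.trans_le ht.1, ht.2.trans_lt hωT⟩
    obtain ⟨hmem, hFxt⟩ := hρ t (Ioo_subset_Icc_self htm)
    have hd : HasDerivAt F (f (ρ t))⁻¹ (ρ t) := hFder _ hmem
    have hne : (f (ρ t))⁻¹ ≠ 0 := inv_ne_zero (hpos _ hmem).ne'
    have hev : ∀ᶠ y in nhds t, F (ρ y) = y := by
      filter_upwards [Ioo_mem_nhds htm.1 htm.2] with y hy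
      exact (hρ y (Ioo_subset_Icc_self hy)).2
    have := HasDerivAt.of_local_left_inverse (hcontAt t htm) hd hne hev
    rwa [inv_inv] at this
  · intro t ht
    exact (hρ t ⟨hα.le.trans ht.1, ht.2.trans hωT.le⟩).1

lemma lint_Ioc_eq {g : ℝ → ℝ} (hg : Continuous g) {a b : ℝ} (hab : a ≤ b)
    (hpos : ∀ s ∈ Icc a b, 0 < g s) :
    ∫⁻ s in Ioc a b, ENNReal.ofReal ((g s)⁻¹) = ENNReal.ofReal (∫ s in a..b, (g s)⁻¹) := by
  have hcont : ContinuousOn (fun s => (g s)⁻¹) (Icc a b) :=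
    ContinuousOn.inv₀ hg.continuousOn (fun s hs => (hpos s hs).ne')
  have hInt : IntegrableOn (fun s => (g s)⁻¹) (Ioc a b) volume :=
    (hcont.integrableOn_Icc).mono_set Ioc_subset_Icc_self
  rw [intervalIntegral.integral_of_le hab,
    ← MeasureTheory.ofReal_integral_eq_lintegral_ofReal hInt]
  exact (ae_restrict_iff' measurableSet_Ioc).mpr (Filter.Eventually.of_forall
    (fun s hs => (inv_pos.mpr (hpos s (Ioc_subset_Icc_self hs))).le))

lemma trunc {g : ℝ → ℝ} (hg : Continuous g) (hpos : ∀ s, 1 ≤ s → 0 < g s) {T : ℝ} (hT : 0 < T)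
    (hint : ENNReal.ofReal T < ∫⁻ s in Ioi 1, ENNReal.ofReal ((g s)⁻¹)) :
    ∃ R : ℝ, 1 < R ∧ T < ∫ s in (1:ℝ)..R, (g s)⁻¹ := by
  set G : ℝ → ENNReal := fun s => ENNReal.ofReal ((g s)⁻¹) with hGdef
  have hGmeas : Measurable G := (hg.measurable.inv).ennreal_ofReal
  have key : ∫⁻ s in Ioi 1, G s = ⨆ n : ℕ, ∫⁻ s in Ioc 1 (2 + (n:ℝ)), G s := by
    have h1 : ∀ n : ℕ, ∫⁻ s in Ioc (1:ℝ) (2 + (n:ℝ)), G s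
        = ∫⁻ s, (Ioc (1:ℝ) (2 + (n:ℝ))).indicator G s := by
      intro n; rw [lintegral_indicator measurableSet_Ioc]
    have h2 : ∫⁻ s in Ioi (1:ℝ), G s = ∫⁻ s, (Ioi (1:ℝ)).indicator G s := by
      rw [lintegral_indicator measurableSet_Ioi]
    rw [h2]
    simp_rw [h1]
    rw [← lintegral_iSup (fun n => hGmeas.indicator measurableSet_Ioc) ?_]
    · congr 1
      funext s
      by_cases hs : s ∈ Ioi (1:ℝ)
      · obtain ⟨n, hn⟩ := exists_nat_ge (s - 2)
        apply le_antisymm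
        · rw [Set.indicator_of_mem hs]
          refine le_trans ?_ (le_iSup (fun m : ℕ => (Ioc (1:ℝ) (2 + (m:ℝ))).indicator G s) n)
          rw [Set.indicator_of_mem (show s ∈ Ioc (1:ℝ) (2 + (n:ℝ)) from ⟨hs, by linarith⟩)]
        · refine iSup_le fun m => ?_
          refine le_trans ((Set.indicator_le_self _ _) s) ?_
          rw [Set.indicator_of_mem hs]
      · rw [Set.indicator_of_notMem hs]
        symm
        simp only [ENNReal.iSup_eq_zero]
        exact fun n => Set.indicator_of_notMem (fun h => hs h.1) _
    · intro m n hmn s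
      refine Set.indicator_le_indicator_of_subset (Set.Ioc_subset_Ioc_right ?_) (fun _ => by simp) s
      have : (m:ℝ) ≤ (n:ℝ) := Nat.cast_le.mpr hmn
      linarith
  rw [key] at hint
  rw [lt_iSup_iff] at hint
  obtain ⟨n, hn⟩ := hint
  have hn0 : (0:ℝ) ≤ (n:ℝ) := Nat.cast_nonneg n
  refine ⟨2 + n, by linarith, ?_⟩
  rw [lint_Ioc_eq hg (by linarith) (fun s hs => hpos s hs.1)] at hn
  exact (ENNReal.ofReal_lt_ofReal_iff_of_nonneg hT.le).mp hn

lemma left_margin {f : ℝ → ℝ} (hf : Continuous f) (h1 : 0 < f 1) :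
    ∃ u, u < 1 ∧ ∀ s ∈ Icc u (1:ℝ), 0 < f s := by
  obtain ⟨δ, hδ, hball⟩ := Metric.continuousAt_iff.mp hf.continuousAt (f 1) h1
  refine ⟨1 - δ/2, by linarith, fun s hs => ?_⟩
  have hd : dist s 1 < δ := by
    rw [Real.dist_eq, abs_lt]
    constructor
    · linarith [hs.1]
    · linarith [hs.2]
  have := hball hd
  rw [Real.dist_eq, abs_lt] at this
  linarith [this.1]

lemma exists_sol (β : ℝ) (hβ : 0 < β) (n : ℕ) (e : ℕ → ℝ) (he : ∀ k, 0 ≤ e k)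
    {T : ℝ} (hT : 0 < T) (hcond : SatisfiesEllCond T (pf β n e)) :
    ∃ ρ : ℝ → ℝ, ρ 0 = 1 ∧ (∀ t ∈ Icc (0:ℝ) T, HasDerivAt ρ (pf β n e (ρ t)) t) ∧
      ∃ Cb : ℝ, ∀ t ∈ Icc (0:ℝ) T, |ρ t| ≤ Cb := by
  set g := pf β n e with hgdef
  have hgc : Continuous g := pf_continuous β n e
  rcases hcond with h1 | ⟨h1, sHat, hsHat1, hsHat0, hsHatpos⟩ | ⟨hpos, hint⟩
  · rcases eq_or_lt_of_le h1 with heq | hlt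
    · refine ⟨fun _ => 1, rfl, fun t ht => ?_, 1, fun t ht => by norm_num⟩
      show HasDerivAt (fun _ : ℝ => (1:ℝ)) (g 1) t
      rw [heq]
      exact hasDerivAt_const t 1
    · -- decreasing case
      have hg0 : 0 ≤ g 0 := by
        have hsum : 0 ≤ ∑ k ∈ Finset.range n, e k * (0:ℝ) ^ k :=
          Finset.sum_nonneg fun k _ => mul_nonneg (he k) (pow_nonneg le_rfl k)
        have hval : g 0 = β * (∑ k ∈ Finset.range n, e k * (0:ℝ) ^ k) := by
          simp [hgdef, pf]
        rw [hval]; exact mul_nonneg hβ.le hsum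
      set S : Set ℝ := Icc (0:ℝ) 1 ∩ {s | 0 ≤ g s} with hSdef
      have hScomp : IsCompact S := isCompact_Icc.inter_right (isClosed_le continuous_const hgc)
      have hSne : S.Nonempty := ⟨0, ⟨le_rfl, zero_le_one⟩, hg0⟩
      set a := sSup S with hadef
      have haS : a ∈ S := hScomp.sSup_mem hSne
      have ha01 : a ∈ Icc (0:ℝ) 1 := haS.1
      have hga0 : 0 ≤ g a := haS.2
      have ha1 : a < 1 := lt_of_le_of_ne ha01.2 (fun h => by rw [h] at hga0; linarith)
      have hneg : ∀ s ∈ Ioc a 1, g s < 0 := by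
        intro s hs
        by_contra hcon
        push_neg at hcon
        have hmem : s ∈ S := ⟨⟨ha01.1.trans hs.1.le, hs.2⟩, hcon⟩
        exact absurd (le_csSup hScomp.bddAbove hmem) (not_le.mpr hs.1)
      have hga : g a = 0 := by
        refine le_antisymm ?_ hga0
        by_contra hcon
        push_neg at hcon
        obtain ⟨δ, hδ, hball⟩ := Metric.continuousAt_iff.mp hgc.continuousAt (g a) hcon
        set s0 := min (a + δ/2) ((a+1)/2) with hs0def
        have hs0a : a < s0 := lt_min (by linarith) (by linarith [ha1])
        have hs01 : s0 ≤ 1 := (min_le_right _ _).trans (by linarith [ha01.2])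
        have hds : dist s0 a < δ := by
          rw [Real.dist_eq, abs_lt]
          have hle : s0 ≤ a + δ/2 := min_le_left _ _
          constructor <;> [linarith [hs0a]; linarith]
        have hcl := hball hds
        rw [Real.dist_eq, abs_lt] at hcl
        have hgs0 : 0 < g s0 := by linarith [hcl.1]
        exact absurd hgs0 (not_lt.mpr (hneg s0 ⟨hs0a, hs01⟩).le)
      set ft : ℝ → ℝ := fun s => -(g (2 - s)) with hftdef
      have hftc : Continuous ft := (hgc.comp (by continuity)).neg
      set z := 2 - a with hzdef
      have hz1 : 1 < z := by rw [hzdef]; linarith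
      have hftpos : ∀ s ∈ Ico (1:ℝ) z, 0 < ft s := by
        intro s hs
        have hmem : 2 - s ∈ Ioc a 1 := ⟨by linarith [hs.2], by linarith [hs.1]⟩
        have := hneg _ hmem
        simp only [hftdef]
        linarith
      set L := β * (∑ k ∈ Finset.range n, e k * (k * (2:ℝ) ^ (k-1)) + 1) with hLdef
      have hsumL : 0 ≤ ∑ k ∈ Finset.range n, e k * (k * (2:ℝ) ^ (k-1)) :=
        Finset.sum_nonneg fun k _ => mul_nonneg (he k) (by positivity)
      have hL : 0 < L := mul_pos hβ (by linarith)
      have hb : ∀ s ∈ Icc (1:ℝ) z, ft s ≤ L * (z - s) := by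
        intro s hs
        have hsz : s ≤ z := hs.2
        have h2s : 2 - s ∈ Icc (-2:ℝ) 2 := ⟨by nlinarith [ha01.1, hs.2], by linarith [hs.1]⟩
        have haM : a ∈ Icc (-2:ℝ) 2 := ⟨by linarith [ha01.1], by linarith [ha01.2]⟩
        have hlip := pf_lip β hβ.le n e he 2 (by norm_num) haM h2s
        have hsz' : s ≤ 2 - a := hzdef ▸ hsz
        have habs : |(2 - s) - a| = z - s := by
          rw [abs_of_nonneg (by linarith : (0:ℝ) ≤ (2 - s) - a)]
          simp only [hzdef]; ring
        calc ft s ≤ |g (2 - s) - g a| := by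
              simp only [hftdef, hga, sub_zero]
              exact neg_le_abs _
          _ ≤ L * |(2 - s) - a| := hlip
          _ = L * (z - s) := by rw [habs]
      obtain ⟨v, hv1, hvz, hFv⟩ := div_lemma hftc hz1 hL hT hftpos hb
      have hft1 : 0 < ft 1 := by
        have : (2:ℝ) - 1 = 1 := by norm_num
        simp only [hftdef, this]
        linarith
      obtain ⟨u, hu1, hupos⟩ := left_margin hftc hft1
      have hposuv : ∀ s ∈ Icc u v, 0 < ft s := by
        intro s hs
        rcases le_total s 1 with h | h
        · exact hupos s ⟨hs.1, h⟩
        · exact hftpos s ⟨h, lt_of_le_of_lt hs.2 hvz⟩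
      obtain ⟨ρ0, hρ00, hρ0der, hρ0mem⟩ := core_lemma hftc hu1 hv1 hT.le hposuv hFv
      refine ⟨fun t => 2 - ρ0 t, by show 2 - ρ0 0 = 1; rw [hρ00]; norm_num, fun t ht => ?_,
        2 + (|u| + |v|), fun t ht => ?_⟩
      · have hd := (hρ0der t ht).const_sub 2
        have heq2 : -(ft (ρ0 t)) = g (2 - ρ0 t) := by simp [hftdef]
        rw [heq2] at hd
        exact hd
      · have hm := hρ0mem t ht
        have h1' : |ρ0 t| ≤ |u| + |v| := by
          rw [abs_le]
          constructor
          · linarith [neg_abs_le u, hm.1, abs_nonneg v]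
          · linarith [le_abs_self v, hm.2, abs_nonneg u]
        calc |2 - ρ0 t| ≤ |(2:ℝ)| + |ρ0 t| := abs_sub _ _
          _ ≤ 2 + (|u| + |v|) := by rw [abs_two]; linarith
  · -- case (ii)
    have hsH0 : (0:ℝ) < sHat := by linarith
    set L := β * (∑ k ∈ Finset.range n, e k * (k * sHat ^ (k-1)) + 1) with hLdef
    have hsumL : 0 ≤ ∑ k ∈ Finset.range n, e k * (k * sHat ^ (k-1)) :=
      Finset.sum_nonneg fun k _ => mul_nonneg (he k) (by positivity)
    have hL : 0 < L := mul_pos hβ (by linarith)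
    have hb : ∀ s ∈ Icc (1:ℝ) sHat, g s ≤ L * (sHat - s) := by
      intro s hs
      have hsM : s ∈ Icc (-sHat) sHat := ⟨by linarith [hs.1], hs.2⟩
      have hHM : sHat ∈ Icc (-sHat) sHat := ⟨by linarith, le_rfl⟩
      have hlip := pf_lip β hβ.le n e he sHat hsH0.le hHM hsM
      have habs : |s - sHat| = sHat - s := by
        rw [abs_of_nonpos (by linarith [hs.2] : s - sHat ≤ 0)]; ring
      calc g s ≤ |g s - g sHat| := by
            rw [hsHat0, sub_zero]
            exact le_abs_self _
        _ ≤ L * |s - sHat| := hlip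
        _ = L * (sHat - s) := by rw [habs]
    obtain ⟨v, hv1, hvz, hFv⟩ := div_lemma hgc hsHat1 hL hT hsHatpos hb
    obtain ⟨u, hu1, hupos⟩ := left_margin hgc h1
    have hposuv : ∀ s ∈ Icc u v, 0 < g s := by
      intro s hs
      rcases le_total s 1 with h | h
      · exact hupos s ⟨hs.1, h⟩
      · exact hsHatpos s ⟨h, lt_of_le_of_lt hs.2 hvz⟩
    obtain ⟨ρ0, hρ00, hρ0der, hρ0mem⟩ := core_lemma hgc hu1 hv1 hT.le hposuv hFv
    refine ⟨ρ0, hρ00, hρ0der, |u| + |v|, fun t ht => ?_⟩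
    have hm := hρ0mem t ht
    rw [abs_le]
    constructor
    · linarith [neg_abs_le u, hm.1, abs_nonneg v]
    · linarith [le_abs_self v, hm.2, abs_nonneg u]
  · -- case (iii)
    have hint' : ENNReal.ofReal T < ∫⁻ s in Ioi 1, ENNReal.ofReal ((g s)⁻¹) := by
      simpa [one_div] using hint
    obtain ⟨R, hR1, hRv⟩ := trunc hgc hpos hT hint'
    obtain ⟨u, hu1, hupos⟩ := left_margin hgc (hpos 1 le_rfl)
    have hposuv : ∀ s ∈ Icc u R, 0 < g s := by
      intro s hs
      rcases le_total s 1 with h | h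
      · exact hupos s ⟨hs.1, h⟩
      · exact hpos s h
    obtain ⟨ρ0, hρ00, hρ0der, hρ0mem⟩ := core_lemma hgc hu1 hR1 hT.le hposuv hRv
    refine ⟨ρ0, hρ00, hρ0der, |u| + |R|, fun t ht => ?_⟩
    have hm := hρ0mem t ht
    rw [abs_le]
    constructor
    · linarith [neg_abs_le u, hm.1, abs_nonneg R]
    · linarith [le_abs_self R, hm.2, abs_nonneg u]

lemma unique_sol (β : ℝ) (hβ : 0 < β) (n : ℕ) (e : ℕ → ℝ) (he : ∀ k, 0 ≤ e k)
    {T : ℝ} (ρ₁ ρ₂ : ℝ → ℝ)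
    (h1d : ∀ t ∈ Icc (0:ℝ) T, HasDerivAt ρ₁ (pf β n e (ρ₁ t)) t)
    (h1b : ∃ Cb : ℝ, ∀ t ∈ Icc (0:ℝ) T, |ρ₁ t| ≤ Cb)
    (h2d : ∀ t ∈ Icc (0:ℝ) T, HasDerivAt ρ₂ (pf β n e (ρ₂ t)) t)
    (h2b : ∃ Cb : ℝ, ∀ t ∈ Icc (0:ℝ) T, |ρ₂ t| ≤ Cb)
    (h0 : ρ₁ 0 = ρ₂ 0) :
    EqOn ρ₁ ρ₂ (Icc 0 T) := by
  obtain ⟨C₁, hC₁⟩ := h1b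
  obtain ⟨C₂, hC₂⟩ := h2b
  set C := max (max C₁ C₂) 0 with hCdef
  have hC0 : 0 ≤ C := le_max_right _ _
  set K := β * (∑ k ∈ Finset.range n, e k * (k * C ^ (k-1)) + 1) with hKdef
  have hsumK : 0 ≤ ∑ k ∈ Finset.range n, e k * (k * C ^ (k-1)) :=
    Finset.sum_nonneg fun k _ => mul_nonneg (he k) (by positivity)
  have hK0 : 0 ≤ K := mul_nonneg hβ.le (by linarith)
  have hlip : LipschitzOnWith K.toNNReal (pf β n e) (Icc (-C) C) := by
    apply LipschitzOnWith.of_dist_le_mul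
    intro x hx y hy
    rw [Real.dist_eq, Real.dist_eq, Real.coe_toNNReal K hK0]
    exact pf_lip β hβ.le n e he C hC0 hy hx
  apply ODE_solution_unique_of_mem_Icc_right
    (v := fun _ x => pf β n e x) (s := fun _ => Icc (-C) C) (fun _ _ => hlip)
    (fun t ht => (h1d t ht).continuousAt.continuousWithinAt)
    (fun t ht => (h1d t (Ico_subset_Icc_self ht)).hasDerivWithinAt)
    (fun t ht => ?_)
    (fun t ht => (h2d t ht).continuousAt.continuousWithinAt)
    (fun t ht => (h2d t (Ico_subset_Icc_self ht)).hasDerivWithinAt)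
    (fun t ht => ?_) h0
  · have := hC₁ t (Ico_subset_Icc_self ht)
    rw [abs_le] at this
    constructor
    · have : -C ≤ -C₁ := by simp only [hCdef]; rw [neg_le_neg_iff]; exact (le_max_left _ _).trans (le_max_left _ _)
      linarith [(abs_le.mp (hC₁ t (Ico_subset_Icc_self ht))).1]
    · exact this.2.trans ((le_max_left _ _).trans (le_max_left _ _))
  · have := hC₂ t (Ico_subset_Icc_self ht)
    rw [abs_le] at this
    constructor
    · have hc : C₂ ≤ C := (le_max_right C₁ C₂).trans (le_max_left _ _)
      linarith [this.1]
    · exact this.2.trans ((le_max_right _ _).trans (le_max_left _ _))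

lemma one_add_pow_le (k : ℕ) {ε : ℝ} (h0 : 0 ≤ ε) (h1 : ε ≤ 1) :
    (1+ε)^k ≤ 1 + ((2:ℝ)^k - 1)*ε := by
  induction k with
  | zero => simp
  | succ k ih =>
    have h2 : (0:ℝ) ≤ (2:ℝ)^k - 1 := by
      have : (1:ℝ) ≤ 2^k := one_le_pow₀ (by norm_num)
      linarith
    have hp : (0:ℝ) ≤ (1+ε)^k := by positivity
    calc (1+ε)^(k+1) = (1+ε)^k * (1+ε) := by ring
      _ ≤ (1 + (2^k - 1)*ε) * (1+ε) := by nlinarith [ih]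
      _ ≤ 1 + ((2:ℝ)^(k+1) - 1)*ε := by
          have he : (2:ℝ)^(k+1) = 2 * 2^k := by ring
          nlinarith [mul_nonneg (mul_nonneg h2 h0) (by linarith : (0:ℝ) ≤ 1 - ε)]

lemma pe_mono (β : ℝ) (hβ : 0 < β) (n : ℕ) (d : ℕ → ℝ) (hd : ∀ k, 0 ≤ d k)
    {ε : ℝ} (hε : 0 ≤ ε) {s : ℝ} (hs : 0 ≤ s) :
    pf β n d s ≤ pf β n (fun k => (1+ε)^k * d k) s := by
  unfold pf
  have : ∑ k ∈ Finset.range n, d k * s ^ k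
      ≤ ∑ k ∈ Finset.range n, (1+ε)^k * d k * s ^ k := by
    refine Finset.sum_le_sum fun k _ => ?_
    have h1 : (1:ℝ) ≤ (1+ε)^k := one_le_pow₀ (by linarith)
    have h2 : 0 ≤ d k * s ^ k := mul_nonneg (hd k) (pow_nonneg hs k)
    nlinarith
  nlinarith

lemma pe_pert (β : ℝ) (hβ : 0 < β) (n : ℕ) (d : ℕ → ℝ) (hd : ∀ k, 0 ≤ d k)
    {ε : ℝ} (hε : 0 ≤ ε) (hε1 : ε ≤ 1) {R : ℝ} (hR : 1 ≤ R) {s : ℝ} (hs0 : 0 ≤ s) (hsR : s ≤ R) :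
    pf β n (fun k => (1+ε)^k * d k) s
      ≤ pf β n d s + ε * (β * ∑ k ∈ Finset.range n, ((2:ℝ)^k - 1) * d k * R^k) := by
  have key : ∑ k ∈ Finset.range n, (1+ε)^k * d k * s ^ k
      - ∑ k ∈ Finset.range n, d k * s ^ k
      ≤ ε * ∑ k ∈ Finset.range n, ((2:ℝ)^k - 1) * d k * R^k := by
    rw [← Finset.sum_sub_distrib, Finset.mul_sum]
    refine Finset.sum_le_sum fun k _ => ?_
    have h1 : (1+ε)^k - 1 ≤ ((2:ℝ)^k - 1)*ε := by linarith [one_add_pow_le k hε hε1]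
    have h2 : (0:ℝ) ≤ (2:ℝ)^k - 1 := by
      have : (1:ℝ) ≤ 2^k := one_le_pow₀ (by norm_num)
      linarith
    have h3 : d k * s ^ k ≤ d k * R ^ k :=
      mul_le_mul_of_nonneg_left (pow_le_pow_left₀ hs0 hsR k) (hd k)
    have h4 : (0:ℝ) ≤ d k * s ^ k := mul_nonneg (hd k) (pow_nonneg hs0 k)
    have h5 : (0:ℝ) ≤ (1+ε)^k - 1 := by
      have : (1:ℝ) ≤ (1+ε)^k := one_le_pow₀ (by linarith)
      linarith
    calc (1+ε)^k * d k * s ^ k - d k * s ^ k = ((1+ε)^k - 1) * (d k * s ^ k) := by ring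
      _ ≤ (((2:ℝ)^k - 1)*ε) * (d k * R ^ k) := by nlinarith
      _ = ε * (((2:ℝ)^k - 1) * d k * R^k) := by ring
  unfold pf
  nlinarith [key]

lemma least_zero {q : ℝ → ℝ} (hq : Continuous q) (h1 : 0 < q 1)
    (hex : ∃ s, 1 ≤ s ∧ q s ≤ 0) :
    ∃ sHat, 1 < sHat ∧ q sHat = 0 ∧ ∀ s ∈ Ico (1:ℝ) sHat, 0 < q s := by
  set S := Ici (1:ℝ) ∩ {s | q s ≤ 0} with hSdef
  have hSclosed : IsClosed S := isClosed_Ici.inter (isClosed_le hq continuous_const)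
  obtain ⟨s₂, hs₂1, hs₂2⟩ := hex
  have hne : S.Nonempty := ⟨s₂, hs₂1, hs₂2⟩
  have hbdd : BddBelow S := ⟨1, fun s hs => hs.1⟩
  set z := sInf S with hzdef
  have hzS : z ∈ S := hSclosed.csInf_mem hne hbdd
  have hz1 : 1 ≤ z := hzS.1
  have hlow : ∀ s ∈ Ico (1:ℝ) z, 0 < q s := by
    intro s hs
    by_contra h
    push_neg at h
    exact absurd (csInf_le hbdd ⟨hs.1, h⟩) (not_le.mpr hs.2)
  have hz1' : 1 < z := lt_of_le_of_ne hz1 (fun h => by rw [← h] at hzS; exact absurd (hzS.2 : q 1 ≤ 0) (not_le.mpr h1))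
  have hq0 : q z = 0 := by
    refine le_antisymm hzS.2 ?_
    by_contra hneg
    push_neg at hneg
    obtain ⟨δ, hδ, hball⟩ := Metric.continuousAt_iff.mp hq.continuousAt (-(q z)) (by linarith)
    set s := max 1 (z - δ/2) with hsdef
    have hs1 : 1 ≤ s := le_max_left _ _
    have hsz : s < z := max_lt hz1' (by linarith)
    have hsd : dist s z < δ := by
      rw [Real.dist_eq, abs_lt]
      have : z - δ/2 ≤ s := le_max_right _ _
      constructor <;> linarith
    have := hball hsd
    rw [Real.dist_eq, abs_lt] at this
    have : q s < 0 := by linarith [this.2]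
    exact absurd (hlow s ⟨hs1, hsz⟩) (not_lt.mpr this.le)
  exact ⟨z, hz1', hq0, hlow⟩

lemma log_integral' {A L z : ℝ} (hA : 0 < A) (hL : 0 < L) :
    ∫ s in z..(z+1), (A + L * (s - z))⁻¹ = L⁻¹ * (Real.log (A + L) - Real.log A) := by
  have hder : ∀ s ∈ uIcc z (z+1), HasDerivAt (fun s => L⁻¹ * Real.log (A + L * (s - z)))
      ((A + L * (s - z))⁻¹) s := by
    intro s hs
    rw [Set.uIcc_of_le (by linarith)] at hs
    have hpos : 0 < A + L * (s - z) := by nlinarith [hs.1]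
    have h1 : HasDerivAt (fun s : ℝ => A + L * (s - z)) L s := by
      have := ((hasDerivAt_id s).sub_const z).const_mul L
      simpa using this.const_add A
    have h2 : HasDerivAt (fun s => Real.log (A + L * (s - z))) ((A + L * (s - z))⁻¹ * L) s :=
      by have := Real.hasDerivAt_log hpos.ne'; exact this.comp s h1
    have h3 : HasDerivAt (fun s => L⁻¹ * Real.log (A + L * (s - z))) (L⁻¹ * ((A + L * (s - z))⁻¹ * L)) s :=
      h2.const_mul L⁻¹
    convert h3 using 1
    field_simp
  have hint : IntervalIntegrable (fun s => (A + L * (s - z))⁻¹) volume z (z+1) := by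
    apply ContinuousOn.intervalIntegrable
    apply ContinuousOn.inv₀
    · fun_prop
    · intro s hs
      rw [Set.uIcc_of_le (by linarith)] at hs
      nlinarith [hs.1]
  rw [intervalIntegral.integral_eq_sub_of_hasDerivAt hder hint]
  have e1 : z + 1 - z = (1:ℝ) := by ring
  have e2 : z - z = (0:ℝ) := by ring
  rw [e1, e2, mul_one, mul_zero, add_zero]
  ring

lemma stability (β : ℝ) (hβ : 0 < β) (n : ℕ) (d : ℕ → ℝ) (hd : ∀ k, 0 ≤ d k)
    {T : ℝ} (hT : 0 < T) (hcond : SatisfiesEllCond T (pf β n d)) :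
    ∃ ε₀ : ℝ, 0 < ε₀ ∧ ∀ ε : ℝ, 0 < ε → ε < ε₀ →
      SatisfiesEllCond T (pf β n (fun k => (1+ε)^k * d k)) := by
  set g := pf β n d with hgdef
  have hgc : Continuous g := pf_continuous β n d
  have h2k : ∀ k : ℕ, (0:ℝ) ≤ (2:ℝ)^k - 1 := fun k => by
    have : (1:ℝ) ≤ 2^k := one_le_pow₀ (by norm_num)
    linarith
  by_cases hz : ∃ z, 1 ≤ z ∧ g z ≤ 0
  · obtain ⟨z, hz1, hgz⟩ := hz
    set R := z + 1 with hRdef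
    have hR0 : (0:ℝ) < R := by linarith
    set KK := β * ∑ k ∈ Finset.range n, ((2:ℝ)^k - 1) * d k * R^k + 1 with hKKdef
    have hKKsum : 0 ≤ β * ∑ k ∈ Finset.range n, ((2:ℝ)^k - 1) * d k * R^k :=
      mul_nonneg hβ.le (Finset.sum_nonneg fun k _ =>
        mul_nonneg (mul_nonneg (h2k k) (hd k)) (pow_nonneg hR0.le k))
    have hKK : 0 < KK := by linarith
    set LL := β * (∑ k ∈ Finset.range n, (2:ℝ)^k * d k * ((k:ℝ) * R^(k-1)) + 1) with hLLdef
    have hLLsum : 0 ≤ ∑ k ∈ Finset.range n, (2:ℝ)^k * d k * ((k:ℝ) * R^(k-1)) :=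
      Finset.sum_nonneg fun k _ => mul_nonneg (mul_nonneg (by positivity) (hd k))
        (mul_nonneg (by positivity) (pow_nonneg hR0.le _))
    have hLL : 0 < LL := mul_pos hβ (by linarith)
    refine ⟨min 1 (LL * Real.exp (-(LL * (T+1))) / KK), lt_min one_pos (by positivity), ?_⟩
    intro ε hε hεlt
    have hε1 : ε ≤ 1 := le_of_lt (lt_of_lt_of_le hεlt (min_le_left _ _))
    set e : ℕ → ℝ := fun k => (1+ε)^k * d k with hedef
    have he : ∀ k, 0 ≤ e k := fun k => mul_nonneg (pow_nonneg (by linarith) k) (hd k)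
    set q := pf β n e with hqdef
    have hqc : Continuous q := pf_continuous β n e
    by_cases hq1 : q 1 ≤ 0
    · exact Or.inl hq1
    push_neg at hq1
    by_cases hqz : ∃ s, 1 ≤ s ∧ q s ≤ 0
    · exact Or.inr (Or.inl ⟨hq1, least_zero hqc hq1 hqz⟩)
    · push_neg at hqz
      refine Or.inr (Or.inr ⟨fun s hs => hqz s hs, ?_⟩)
      set A := KK * ε with hAdef
      have hA : 0 < A := mul_pos hKK hε
      have hqzA : q z ≤ A := by
        have hp := pe_pert β hβ n d hd hε.le hε1 (by linarith : (1:ℝ) ≤ R)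
          (by linarith : (0:ℝ) ≤ z) (by linarith : z ≤ R)
        have : q z ≤ g z + ε * (KK - 1) := by
          rw [hqdef, hedef, hKKdef]
          convert hp using 3
          ring
        nlinarith [hgz, hε.le]
      have hlipq : ∀ s ∈ Icc z R, q s ≤ A + LL * (s - z) := by
        intro s hs
        have hsub : s ∈ Icc (-R) R := ⟨by linarith [hs.1], hs.2⟩
        have hzsub : z ∈ Icc (-R) R := ⟨by linarith, by linarith⟩
        have hlip := pf_lip β hβ.le n e he R hR0.le hzsub hsub
        have hLe : β * (∑ k ∈ Finset.range n, e k * ((k:ℝ) * R^(k-1)) + 1) ≤ LL := by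
          rw [hLLdef]
          refine mul_le_mul_of_nonneg_left (add_le_add_left (Finset.sum_le_sum fun k _ => ?_) 1) hβ.le
          have h12 : (1+ε)^k ≤ (2:ℝ)^k := pow_le_pow_left₀ (by linarith) (by linarith) k
          have hnn : (0:ℝ) ≤ (k:ℝ) * R^(k-1) := mul_nonneg (by positivity) (pow_nonneg hR0.le _)
          calc e k * ((k:ℝ) * R^(k-1)) = (1+ε)^k * d k * ((k:ℝ) * R^(k-1)) := by rw [hedef]
            _ ≤ (2:ℝ)^k * d k * ((k:ℝ) * R^(k-1)) :=
                mul_le_mul_of_nonneg_right (mul_le_mul_of_nonneg_right h12 (hd k)) hnn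
        have habs : |s - z| = s - z := abs_of_nonneg (by linarith [hs.1])
        have hfin := hlip.trans (mul_le_mul_of_nonneg_right hLe (abs_nonneg _))
        rw [habs] at hfin
        have h6 : q s - q z ≤ |q s - q z| := le_abs_self _
        linarith
      -- integral chain
      have hq_pos_zR : ∀ s ∈ Icc z R, 0 < q s := fun s hs => hqz s (by linarith [hs.1])
      have hint1 : IntervalIntegrable (fun s => (A + LL * (s - z))⁻¹) volume z R := by
        apply ContinuousOn.intervalIntegrable
        rw [Set.uIcc_of_le (by linarith)]
        apply ContinuousOn.inv₀
        · fun_prop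
        · intro s hs
          nlinarith [hs.1]
      have hint2 : IntervalIntegrable (fun s => (q s)⁻¹) volume z R := by
        apply ContinuousOn.intervalIntegrable
        rw [Set.uIcc_of_le (by linarith)]
        exact ContinuousOn.inv₀ hqc.continuousOn (fun s hs => (hq_pos_zR s hs).ne')
      have h3 : ∫ s in z..R, (A + LL*(s-z))⁻¹ ≤ ∫ s in z..R, (q s)⁻¹ := by
        apply integral_mono_on (by linarith) hint1 hint2
        intro s hs
        exact inv_anti₀ (hq_pos_zR s hs) (hlipq s hs)
      have h4 : ∫ s in z..R, (A + LL*(s-z))⁻¹ = LL⁻¹ * (Real.log (A+LL) - Real.log A) := by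
        rw [hRdef]
        exact log_integral' hA hLL
      have h5 : T < LL⁻¹ * (Real.log (A+LL) - Real.log A) := by
        have hεlt' : ε < LL * Real.exp (-(LL * (T+1))) / KK :=
          lt_of_lt_of_le hεlt (min_le_right _ _)
        have hAlt : A < LL * Real.exp (-(LL * (T+1))) := by
          rw [hAdef]
          calc KK * ε < KK * (LL * Real.exp (-(LL * (T+1))) / KK) :=
                mul_lt_mul_of_pos_left hεlt' hKK
            _ = LL * Real.exp (-(LL * (T+1))) := by field_simp
        have hlogA : Real.log A < Real.log LL - LL*(T+1) := by
          calc Real.log A < Real.log (LL * Real.exp (-(LL*(T+1)))) := Real.log_lt_log hA hAlt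
            _ = Real.log LL + (-(LL*(T+1))) := by
                rw [Real.log_mul hLL.ne' (Real.exp_ne_zero _), Real.log_exp]
            _ = Real.log LL - LL*(T+1) := by ring
        have hlogAL : Real.log LL ≤ Real.log (A + LL) := Real.log_le_log hLL (by linarith)
        have hfrac : LL * (T+1) < Real.log (A+LL) - Real.log A := by linarith
        calc T < T + 1 := by linarith
          _ = LL⁻¹ * (LL*(T+1)) := by field_simp
          _ < LL⁻¹ * (Real.log (A+LL) - Real.log A) :=
              mul_lt_mul_of_pos_left hfrac (inv_pos.mpr hLL)
      have hTlt : T < ∫ s in z..R, (q s)⁻¹ := by linarith [h3, h4, h5]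
      have hfinal : ENNReal.ofReal T < ∫⁻ s in Ioi (1:ℝ), ENNReal.ofReal ((q s)⁻¹) := by
        calc ENNReal.ofReal T < ENNReal.ofReal (∫ s in z..R, (q s)⁻¹) :=
              (ENNReal.ofReal_lt_ofReal_iff_of_nonneg hT.le).mpr hTlt
          _ = ∫⁻ s in Ioc z R, ENNReal.ofReal ((q s)⁻¹) :=
              (lint_Ioc_eq hqc (by linarith) hq_pos_zR).symm
          _ ≤ ∫⁻ s in Ioi (1:ℝ), ENNReal.ofReal ((q s)⁻¹) :=
              lintegral_mono_set (fun s hs => lt_of_le_of_lt hz1 hs.1)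
      simpa [one_div] using hfinal
  · push_neg at hz
    have hint : ENNReal.ofReal T < ∫⁻ s in Ioi (1:ℝ), ENNReal.ofReal (1 / g s) := by
      rcases hcond with h | ⟨_, sH, hsH1, hsH0, _⟩ | ⟨_, h⟩
      · exact absurd h (not_le.mpr (hz 1 le_rfl))
      · exact absurd hsH0 (ne_of_gt (hz sH (by linarith)))
      · exact h
    obtain ⟨R, hR1, hI⟩ := trunc hgc (fun s hs => hz s hs) hT (by simpa [one_div] using hint)
    set I := ∫ s in (1:ℝ)..R, (g s)⁻¹ with hIdef
    obtain ⟨x₀, hx₀, hmin'⟩ := isCompact_Icc.exists_isMinOn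
      (nonempty_Icc.mpr (by linarith : (1:ℝ) ≤ R)) hgc.continuousOn
    have hmin : ∀ y ∈ Icc (1:ℝ) R, g x₀ ≤ g y := fun y hy => hmin' hy
    set m := g x₀ with hmdef
    have hm : 0 < m := hz x₀ hx₀.1
    set KK := β * ∑ k ∈ Finset.range n, ((2:ℝ)^k - 1) * d k * R^k + 1 with hKKdef
    have hKKsum : 0 ≤ β * ∑ k ∈ Finset.range n, ((2:ℝ)^k - 1) * d k * R^k :=
      mul_nonneg hβ.le (Finset.sum_nonneg fun k _ =>
        mul_nonneg (mul_nonneg (h2k k) (hd k)) (pow_nonneg (by linarith) k))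
    have hKK : 0 < KK := by linarith
    have hIT : T < I := hI
    refine ⟨min 1 (m * (I - T) / ((T+1) * KK)), lt_min one_pos
      (div_pos (mul_pos hm (by linarith)) (mul_pos (by linarith) hKK)), ?_⟩
    intro ε hε hεlt
    have hε1 : ε ≤ 1 := le_of_lt (lt_of_lt_of_le hεlt (min_le_left _ _))
    set e : ℕ → ℝ := fun k => (1+ε)^k * d k with hedef
    have he : ∀ k, 0 ≤ e k := fun k => mul_nonneg (pow_nonneg (by linarith) k) (hd k)
    set q := pf β n e with hqdef
    have hqc : Continuous q := pf_continuous β n e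
    by_cases hq1 : q 1 ≤ 0
    · exact Or.inl hq1
    push_neg at hq1
    by_cases hqz : ∃ s, 1 ≤ s ∧ q s ≤ 0
    · exact Or.inr (Or.inl ⟨hq1, least_zero hqc hq1 hqz⟩)
    · push_neg at hqz
      refine Or.inr (Or.inr ⟨fun s hs => hqz s hs, ?_⟩)
      set c := KK * ε with hcdef
      have hc : 0 < c := mul_pos hKK hε
      have hq_pos : ∀ s ∈ Icc (1:ℝ) R, 0 < q s := fun s hs => hqz s hs.1
      have hkey : ∀ s ∈ Icc (1:ℝ) R, m/(m+c) * (g s)⁻¹ ≤ (q s)⁻¹ := by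
        intro s hs
        have hgs : 0 < g s := hz s hs.1
        have hms : m ≤ g s := hmin s hs
        have hqle : q s ≤ g s + c := by
          have hp := pe_pert β hβ n d hd hε.le hε1 (by linarith : (1:ℝ) ≤ R)
            (by linarith [hs.1] : (0:ℝ) ≤ s) hs.2
          have : q s ≤ g s + ε * (KK - 1) := by
            rw [hqdef, hedef, hKKdef]
            convert hp using 3
            ring
          nlinarith [hε.le]
        have step1 : m/(m+c) * (g s)⁻¹ ≤ (g s + c)⁻¹ := by
          rw [inv_eq_one_div, inv_eq_one_div, div_mul_div_comm, mul_one]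
          rw [div_le_div_iff₀ (by nlinarith : (0:ℝ) < (m+c) * g s) (by linarith : (0:ℝ) < g s + c)]
          nlinarith
        exact step1.trans (inv_anti₀ (hq_pos s hs) hqle)
      have hint1 : IntervalIntegrable (fun s => m/(m+c) * (g s)⁻¹) volume 1 R := by
        apply ContinuousOn.intervalIntegrable
        rw [Set.uIcc_of_le (by linarith)]
        have hci : ContinuousOn (fun s => (g s)⁻¹) (Icc (1:ℝ) R) :=
          ContinuousOn.inv₀ hgc.continuousOn (fun s hs => (hz s hs.1).ne')
        exact continuousOn_const.mul hci
      have hint2 : IntervalIntegrable (fun s => (q s)⁻¹) volume 1 R := by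
        apply ContinuousOn.intervalIntegrable
        rw [Set.uIcc_of_le (by linarith)]
        exact ContinuousOn.inv₀ hqc.continuousOn (fun s hs => (hq_pos s hs).ne')
      have hmono : ∫ s in (1:ℝ)..R, m/(m+c) * (g s)⁻¹ ≤ ∫ s in (1:ℝ)..R, (q s)⁻¹ :=
        integral_mono_on (by linarith) hint1 hint2 hkey
      have hconst : ∫ s in (1:ℝ)..R, m/(m+c) * (g s)⁻¹ = m/(m+c) * I := by
        rw [hIdef, ← intervalIntegral.integral_const_mul]
      clear_value I m c KK
      have harith : T < m/(m+c) * I := by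
        have hεlt' : ε < m * (I - T) / ((T+1) * KK) := lt_of_lt_of_le hεlt (min_le_right _ _)
        have h8 : ε * ((T+1) * KK) < m * (I - T) :=
          (lt_div_iff₀ (mul_pos (by linarith : (0:ℝ) < T+1) hKK)).mp hεlt'
        have hc2 : c * (T+1) < m * (I - T) := by
          have hce : c * (T+1) = ε * ((T+1) * KK) := by rw [hcdef]; ring
          rw [hce]; exact h8
        rw [div_mul_eq_mul_div, lt_div_iff₀ (by linarith : (0:ℝ) < m + c)]
        nlinarith [hc2, hc, hm, hT]
      have hTlt : T < ∫ s in (1:ℝ)..R, (q s)⁻¹ := by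
        rw [hconst] at hmono
        linarith
      have hfinal : ENNReal.ofReal T < ∫⁻ s in Ioi (1:ℝ), ENNReal.ofReal ((q s)⁻¹) := by
        calc ENNReal.ofReal T < ENNReal.ofReal (∫ s in (1:ℝ)..R, (q s)⁻¹) :=
              (ENNReal.ofReal_lt_ofReal_iff_of_nonneg hT.le).mpr hTlt
          _ = ∫⁻ s in Ioc (1:ℝ) R, ENNReal.ofReal ((q s)⁻¹) :=
              (lint_Ioc_eq hqc (by linarith) hq_pos).symm
          _ ≤ ∫⁻ s in Ioi (1:ℝ), ENNReal.ofReal ((q s)⁻¹) :=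
              lintegral_mono_set (fun s hs => hs.1)
      simpa [one_div] using hfinal

/-- Stability of the existence conditions under the `(1+ε)`-perturbation of the
coefficients: if `ℓ(s) = β(∑ₖ cₖ ψ₀^{k-1} s^k - s)` satisfies one of `(ℓ1)-(ℓ3)`, then
for all small `ε > 0` so does `ℓ_ε(s) = β(∑ₖ (1+ε)cₖ ((1+ε)ψ₀)^{k-1} s^k - s)`, and hence
the ODE `ρ' = ℓ_ε(ρ)`, `ρ(0) = 1` has a unique bounded solution on `[0,T]`. -/
theorem stmt_8 (β ψ₀ T : ℝ) (hβ : 0 < β) (hψ₀ : 0 < ψ₀) (hT : 0 < T)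
    (n₀ : ℕ) (c : ℕ → ℝ) (hc : ∀ k, 0 ≤ c k)
    (hcond : SatisfiesEllCond T
      (fun s => β * (∑ k ∈ Finset.range (n₀ + 1), c k * ψ₀ ^ ((k : ℤ) - 1) * s ^ k - s))) :
    ∃ ε₀ > 0, ∀ ε : ℝ, 0 < ε → ε < ε₀ →
      (SatisfiesEllCond T
        (fun s => β * (∑ k ∈ Finset.range (n₀ + 1),
          ((1 + ε) * c k) * ((1 + ε) * ψ₀) ^ ((k : ℤ) - 1) * s ^ k - s))) ∧
      (∃ ρ : ℝ → ℝ, ρ 0 = 1 ∧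
        (∀ t ∈ Icc (0 : ℝ) T, HasDerivAt ρ
          (β * (∑ k ∈ Finset.range (n₀ + 1),
            ((1 + ε) * c k) * ((1 + ε) * ψ₀) ^ ((k : ℤ) - 1) * ρ t ^ k - ρ t)) t) ∧
        (∃ Cb : ℝ, ∀ t ∈ Icc (0 : ℝ) T, |ρ t| ≤ Cb)) ∧
      (∀ ρ₁ ρ₂ : ℝ → ℝ,
        (ρ₁ 0 = 1 ∧
          (∀ t ∈ Icc (0 : ℝ) T, HasDerivAt ρ₁
            (β * (∑ k ∈ Finset.range (n₀ + 1),
              ((1 + ε) * c k) * ((1 + ε) * ψ₀) ^ ((k : ℤ) - 1) * ρ₁ t ^ k - ρ₁ t)) t) ∧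
          (∃ Cb : ℝ, ∀ t ∈ Icc (0 : ℝ) T, |ρ₁ t| ≤ Cb)) →
        (ρ₂ 0 = 1 ∧
          (∀ t ∈ Icc (0 : ℝ) T, HasDerivAt ρ₂
            (β * (∑ k ∈ Finset.range (n₀ + 1),
              ((1 + ε) * c k) * ((1 + ε) * ψ₀) ^ ((k : ℤ) - 1) * ρ₂ t ^ k - ρ₂ t)) t) ∧
          (∃ Cb : ℝ, ∀ t ∈ Icc (0 : ℝ) T, |ρ₂ t| ≤ Cb)) →
        EqOn ρ₁ ρ₂ (Icc 0 T)) := by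
  set d : ℕ → ℝ := fun k => c k * ψ₀ ^ ((k:ℤ) - 1) with hddef
  have hd : ∀ k, 0 ≤ d k := fun k => mul_nonneg (hc k) (zpow_nonneg hψ₀.le _)
  have hcond' : SatisfiesEllCond T (pf β (n₀+1) d) := hcond
  obtain ⟨ε₀, hε₀, hstab⟩ := stability β hβ (n₀+1) d hd hT hcond'
  refine ⟨ε₀, hε₀, fun ε hε hεlt => ?_⟩
  have hne : (1+ε) ≠ 0 := by linarith
  set e : ℕ → ℝ := fun k => (1+ε)^k * d k with hedef
  have he : ∀ k, 0 ≤ e k := fun k => mul_nonneg (pow_nonneg (by linarith) k) (hd k)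
  have hterm : ∀ k : ℕ, ((1+ε) * c k) * ((1+ε) * ψ₀) ^ ((k:ℤ) - 1)
      = (1+ε)^k * (c k * ψ₀ ^ ((k:ℤ) - 1)) := by
    intro k
    rw [mul_zpow, zpow_sub_one₀ hne, zpow_natCast]
    field_simp
  have hfeq : (fun s : ℝ => β * (∑ k ∈ Finset.range (n₀ + 1),
        ((1 + ε) * c k) * ((1 + ε) * ψ₀) ^ ((k : ℤ) - 1) * s ^ k - s)) = pf β (n₀+1) e := by
    funext s
    unfold pf
    congr 2
    exact Finset.sum_congr rfl fun k _ => by rw [hterm k, hedef]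
  have hptw : ∀ x : ℝ, β * (∑ k ∈ Finset.range (n₀ + 1),
      ((1 + ε) * c k) * ((1 + ε) * ψ₀) ^ ((k : ℤ) - 1) * x ^ k - x) = pf β (n₀+1) e x :=
    fun x => congrFun hfeq x
  have hcondε : SatisfiesEllCond T (pf β (n₀+1) e) := hstab ε hε hεlt
  refine ⟨?_, ?_, ?_⟩
  · rw [hfeq]
    exact hcondε
  · obtain ⟨ρ, h0, hder, hb⟩ := exists_sol β hβ (n₀+1) e he hT hcondε
    refine ⟨ρ, h0, fun t ht => ?_, hb⟩
    rw [hptw (ρ t)]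
    exact hder t ht
  · intro ρ₁ ρ₂ h₁ h₂
    obtain ⟨h10, h1d, h1b⟩ := h₁
    obtain ⟨h20, h2d, h2b⟩ := h₂
    exact unique_sol β hβ (n₀+1) e he ρ₁ ρ₂
      (fun t ht => by rw [← hptw (ρ₁ t)]; exact h1d t ht) h1b
      (fun t ht => by rw [← hptw (ρ₂ t)]; exact h2d t ht) h2b (h10.trans h20.symm)
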